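/- Let A be an f-adic ring and let γ : A → Â be the canonical map to its completion. Then the topological closure of γ(A°) in Â is equal to (Â)°, the set of power-bounded elements of Â. -/

import Mathlib

open Filter Topology

/-- A subset `S` of a topological ring is bounded if for every neighbourhood `U` of `0`
there is a neighbourhood `V` of `0` with `V · S ⊆ U`. -/
def IsBoundedSubset {A : Type*} [CommRing A] [TopologicalSpace A] (S : Set A) : Prop :=
  ∀ U ∈ 𝓝 (0 : A), ∃ V ∈ 𝓝 (0 : A), ∀ v ∈ V, ∀ s ∈ S, v * s ∈ U

/-- An element of a topological ring is power-bounded if the set of its powers `aⁿ`, `n ≥ 1`,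
is bounded. -/
def IsPowerBounded {A : Type*} [CommRing A] [TopologicalSpace A] (a : A) : Prop :=
  IsBoundedSubset {x : A | ∃ n : ℕ, 1 ≤ n ∧ x = a ^ n}

/-- `A°`, the set of power-bounded elements of a topological ring. -/
def powerBounded (A : Type*) [CommRing A] [TopologicalSpace A] : Set A :=
  {a : A | IsPowerBounded a}

/-- `I₀` is an ideal of definition of the subring `A₀` of the topological ring `A` if it is
finitely generated and its powers form a basis of neighbourhoods of `0` in `A`. -/
def IsIdealOfDefinition {A : Type*} [CommRing A] [TopologicalSpace A]
    (A₀ : Subring A) (I₀ : Ideal A₀) : Prop :=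
  I₀.FG ∧ (𝓝 (0 : A)).HasBasis (fun n : ℕ => 1 ≤ n)
    (fun n => ⇑A₀.subtype '' ((I₀ ^ n : Ideal A₀) : Set A₀))

/-- A ring of definition of a topological ring is an open subring admitting an ideal of
definition. -/
def IsRingOfDefinition {A : Type*} [CommRing A] [TopologicalSpace A] (A₀ : Subring A) : Prop :=
  IsOpen (A₀ : Set A) ∧ ∃ I₀ : Ideal A₀, IsIdealOfDefinition A₀ I₀

/-- A topological commutative ring is f-adic if it admits a ring of definition. -/
def IsFAdic (A : Type*) [CommRing A] [TopologicalSpace A] : Prop :=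
  ∃ A₀ : Subring A, IsRingOfDefinition A₀

/-- A subring `S` of `A` is integrally closed in `A` if every element of `A` integral
over `S` lies in `S`. -/
def IsIntegrallyClosedSubring {A : Type*} [CommRing A] (S : Subring A) : Prop :=
  ∀ x : A, IsIntegral S x → x ∈ S


section Aux

variable {B : Type*} [CommRing B] [TopologicalSpace B] [IsTopologicalRing B]
variable (J : ℕ → AddSubgroup B)

lemma aux_pow_mem (hmul : ∀ m n x y, x ∈ J m → y ∈ J n → x * y ∈ J (m + n))
    {j : B} (hj : j ∈ J 1) : ∀ k, 1 ≤ k → j ^ k ∈ J k := by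
  intro k hk
  induction k with
  | zero => omega
  | succ k ih =>
    rcases Nat.lt_or_ge k 1 with h | h
    · interval_cases k
      simpa using hj
    · have := hmul k 1 _ _ (ih h) hj
      rw [pow_succ]
      exact this

lemma aux_J1_pb (hbasis : (𝓝 (0 : B)).HasBasis (fun n : ℕ => 1 ≤ n) (fun n => (J n : Set B)))
    (hmul : ∀ m n x y, x ∈ J m → y ∈ J n → x * y ∈ J (m + n))
    (hanti : ∀ {m n : ℕ}, m ≤ n → (J n : Set B) ⊆ J m)
    {j : B} (hj : j ∈ J 1) : IsPowerBounded j := by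
  intro U hU
  obtain ⟨n, hn, hsub⟩ := hbasis.mem_iff.1 hU
  refine ⟨J n, hbasis.mem_of_mem hn, ?_⟩
  rintro v hv s ⟨k, hk, rfl⟩
  exact hsub (hanti (Nat.le_add_right n k) (hmul n k _ _ hv (aux_pow_mem J hmul hj k hk)))

lemma aux_add_pb (hbasis : (𝓝 (0 : B)).HasBasis (fun n : ℕ => 1 ≤ n) (fun n => (J n : Set B)))
    (hanti : ∀ {m n : ℕ}, m ≤ n → (J n : Set B) ⊆ J m)
    {b c : B} (hb : IsPowerBounded b) (hc : IsPowerBounded c) : IsPowerBounded (b + c) := by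
  intro U hU
  obtain ⟨n, hn, hUsub⟩ := hbasis.mem_iff.1 hU
  -- a modulus for c targeting J n
  obtain ⟨V₂, hV₂nhds, hV₂⟩ := hc (J n) (hbasis.mem_of_mem hn)
  obtain ⟨m₂', hm₂', hm₂sub⟩ := hbasis.mem_iff.1 hV₂nhds
  set m₂ : ℕ := max n m₂' with hm₂def
  have hm₂1 : 1 ≤ m₂ := le_trans hn (le_max_left _ _)
  have hm₂c : ∀ v ∈ J m₂, ∀ l : ℕ, v * c ^ l ∈ J n := by
    intro v hv l
    rcases Nat.lt_or_ge l 1 with h | h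
    · interval_cases l
      simpa using hanti (le_max_left n m₂') hv
    · exact hV₂ v (hm₂sub (hanti (le_max_right n m₂') hv)) _ ⟨l, h, rfl⟩
  -- a modulus for b targeting J m₂
  obtain ⟨V₁, hV₁nhds, hV₁⟩ := hb (J m₂) (hbasis.mem_of_mem hm₂1)
  obtain ⟨m₁', hm₁', hm₁sub⟩ := hbasis.mem_iff.1 hV₁nhds
  set m₁ : ℕ := max m₂ m₁' with hm₁def
  have hm₁1 : 1 ≤ m₁ := le_trans hm₂1 (le_max_left _ _)
  have hm₁b : ∀ v ∈ J m₁, ∀ i : ℕ, v * b ^ i ∈ J m₂ := by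
    intro v hv i
    rcases Nat.lt_or_ge i 1 with h | h
    · interval_cases i
      simpa using hanti (le_max_left m₂ m₁') hv
    · exact hV₁ v (hm₁sub (hanti (le_max_right m₂ m₁') hv)) _ ⟨i, h, rfl⟩
  refine ⟨J m₁, hbasis.mem_of_mem hm₁1, ?_⟩
  rintro v hv s ⟨k, hk, rfl⟩
  apply hUsub
  rw [add_pow, Finset.mul_sum]
  refine AddSubgroup.sum_mem _ (fun i hi => ?_)
  have heq : v * (b ^ i * c ^ (k - i) * (k.choose i : B)) =
      (k.choose i) • (v * b ^ i * c ^ (k - i)) := by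
    rw [nsmul_eq_mul]; ring
  rw [heq]
  exact AddSubgroup.nsmul_mem _ (hm₂c _ (hm₁b v hv i) _) _

end Aux

open UniformSpace
theorem statement8 {A : Type*} [CommRing A] [UniformSpace A] [IsUniformAddGroup A]
    [IsTopologicalRing A] (hA : IsFAdic A)
    (γ : A →+* UniformSpace.Completion A)
    (hγ : γ = UniformSpace.Completion.coeRingHom) :
    closure (⇑γ '' powerBounded A) = powerBounded (UniformSpace.Completion A) := by
  obtain ⟨A₀, hopen, I₀, hFG, hbasisA⟩ := hA
  have hγfun : ⇑γ = ((↑) : A → Completion A) := by rw [hγ]; rfl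
  set S : ℕ → Set A := fun n => ⇑A₀.subtype '' ((I₀ ^ n : Ideal A₀) : Set A₀) with hS
  set φ : A₀ →+* Completion A := γ.comp A₀.subtype with hφ
  set J : ℕ → AddSubgroup (Completion A) := fun n =>
    (AddSubgroup.map φ.toAddMonoidHom (I₀ ^ n).toAddSubgroup).topologicalClosure with hJ
  have hJcoe : ∀ n, (J n : Set (Completion A)) = closure (((↑) : A → Completion A) '' S n) := by
    intro n
    rw [hJ]
    rw [AddSubgroup.topologicalClosure_coe, AddSubgroup.coe_map]
    congr 1
    rw [hS, ← Set.image_comp, ← hγfun]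
    rfl
  have hJbasis : (𝓝 (0 : Completion A)).HasBasis (fun n : ℕ => 1 ≤ n)
      (fun n => (J n : Set (Completion A))) := by
    have := hbasisA.hasBasis_of_isDenseInducing Completion.isDenseInducing_coe
    rw [Completion.coe_zero] at this
    exact this.congr (fun _ => Iff.rfl) (fun n _ => (hJcoe n).symm)
  have hmul : ∀ m n x y, x ∈ J m → y ∈ J n → x * y ∈ J (m + n) := by
    intro m n x y hx hy
    have hx' : x ∈ closure ((⇑φ.toAddMonoidHom) '' ((I₀ ^ m).toAddSubgroup : Set A₀)) := by
      have hx2 : x ∈ (J m : Set (Completion A)) := hx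
      simpa [hJ, AddSubgroup.topologicalClosure_coe, AddSubgroup.coe_map] using hx2
    have hy' : y ∈ closure ((⇑φ.toAddMonoidHom) '' ((I₀ ^ n).toAddSubgroup : Set A₀)) := by
      have hy2 : y ∈ (J n : Set (Completion A)) := hy
      simpa [hJ, AddSubgroup.topologicalClosure_coe, AddSubgroup.coe_map] using hy2
    have : x * y ∈ closure ((⇑φ.toAddMonoidHom) '' ((I₀ ^ (m + n)).toAddSubgroup : Set A₀)) := by
      refine map_mem_closure₂ continuous_mul hx' hy' ?_
      rintro _ ⟨a, ha, rfl⟩ _ ⟨b, hb, rfl⟩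
      refine ⟨a * b, ?_, by simp [map_mul]⟩
      have : a * b ∈ I₀ ^ m * I₀ ^ n := Ideal.mul_mem_mul ha hb
      rwa [← pow_add] at this
    show x * y ∈ (J (m + n) : Set (Completion A))
    simpa [hJ, AddSubgroup.topologicalClosure_coe, AddSubgroup.coe_map] using this
  have hanti : ∀ {m n : ℕ}, m ≤ n → ((J n : Set (Completion A)) ⊆ J m) := by
    intro m n hmn
    have : ((I₀ ^ n).toAddSubgroup : Set A₀) ⊆ (I₀ ^ m).toAddSubgroup :=
      fun z hz => Ideal.pow_le_pow_right hmn hz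
    simp only [hJ, AddSubgroup.topologicalClosure_coe, AddSubgroup.coe_map]
    exact closure_mono (Set.image_mono this)
  have hJclosed : ∀ n, IsClosed (J n : Set (Completion A)) := fun n =>
    AddSubgroup.isClosed_topologicalClosure _
  have hγcont : Continuous γ := by rw [hγfun]; exact Completion.continuous_coe A
  -- image of a power-bounded element is power-bounded
  have hD : ∀ a : A, IsPowerBounded a → IsPowerBounded (γ a) := by
    intro a ha U hU
    obtain ⟨n, hn, hUsub⟩ := hJbasis.mem_iff.1 hU
    have hpre : ⇑γ ⁻¹' (J n) ∈ 𝓝 (0 : A) := by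
      have := hγcont.continuousAt (x := (0 : A)) |>.preimage_mem_nhds
        (by rw [map_zero]; exact hJbasis.mem_of_mem hn)
      exact this
    obtain ⟨V, hVnhds, hV⟩ := ha _ hpre
    refine ⟨closure (⇑γ '' V), ?_, ?_⟩
    · have := Completion.isDenseInducing_coe.closure_image_mem_nhds hVnhds
      rw [Completion.coe_zero] at this
      rwa [hγfun]
    · rintro w hw s ⟨k, hk, rfl⟩
      apply hUsub
      have hmaps : Set.MapsTo (· * (γ a) ^ k) (⇑γ '' V) (J n : Set (Completion A)) := by
        rintro _ ⟨v, hvV, rfl⟩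
        show γ v * γ a ^ k ∈ (J n : Set (Completion A))
        rw [← map_pow, ← map_mul]
        exact hV v hvV _ ⟨k, hk, rfl⟩
      have := map_mem_closure (continuous_mul_right ((γ a) ^ k)) hw hmaps
      rwa [(hJclosed n).closure_eq] at this
  -- pull back power-boundedness along γ
  have hG : ∀ a : A, IsPowerBounded (γ a) → IsPowerBounded a := by
    intro a ha U hU
    have hnhds : 𝓝 (0 : A) = Filter.comap (((↑) : A → Completion A)) (𝓝 (0 : Completion A)) := by
      have := Completion.isDenseInducing_coe.isInducing.nhds_eq_comap (0 : A)
      rwa [Completion.coe_zero] at this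
    rw [hnhds, Filter.mem_comap] at hU
    obtain ⟨W, hW, hWsub⟩ := hU
    obtain ⟨V', hV', hV⟩ := ha W hW
    refine ⟨⇑γ ⁻¹' V', ?_, ?_⟩
    · rw [hnhds, hγfun]; exact Filter.preimage_mem_comap hV'
    · rintro v hv s ⟨k, hk, rfl⟩
      apply hγfun ▸ hWsub
      show γ (v * a ^ k) ∈ W
      rw [map_mul, map_pow]
      exact hV _ hv _ ⟨k, hk, rfl⟩
  have hJ1nhds : (J 1 : Set (UniformSpace.Completion A)) ∈ 𝓝 (0 : UniformSpace.Completion A) :=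
    hJbasis.mem_of_mem le_rfl
  have hJ1pb : ∀ j ∈ J 1, IsPowerBounded j := fun j hj =>
    aux_J1_pb J hJbasis hmul hanti hj
  apply Set.Subset.antisymm
  · -- closure (γ '' A°) ⊆ Â°
    intro x hx
    have hnb : {y : Completion A | y - x ∈ J 1} ∈ 𝓝 x := by
      have hc : Continuous (fun y : Completion A => y - x) := continuous_sub_right x
      have := hc.continuousAt (x := x) |>.preimage_mem_nhds (by rw [sub_self]; exact hJ1nhds)
      exact this
    obtain ⟨y, hy1, hy2⟩ := mem_closure_iff_nhds.1 hx _ hnb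
    obtain ⟨a, haA, rfl⟩ := hy2
    show IsPowerBounded x
    have hxeq : x = γ a + (x - γ a) := by ring
    rw [hxeq]
    exact aux_add_pb J hJbasis hanti (hD a haA)
      (hJ1pb _ (by simpa using (J 1).neg_mem hy1))
  · -- Â° ⊆ closure (γ '' A°)
    intro x hx
    rw [mem_closure_iff_nhds]
    intro W hW
    have hUW : (fun y : Completion A => y + x) ⁻¹' W ∈ 𝓝 (0 : Completion A) := by
      have hc : Continuous (fun y : Completion A => y + x) := continuous_add_right x
      have := hc.continuousAt (x := (0 : Completion A)) |>.preimage_mem_nhds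
        (by rwa [zero_add])
      exact this
    obtain ⟨n, hn, hnsub⟩ := hJbasis.mem_iff.1 hUW
    have hnb : {y : Completion A | y - x ∈ J n} ∈ 𝓝 x := by
      have hc : Continuous (fun y : Completion A => y - x) := continuous_sub_right x
      have := hc.continuousAt (x := x) |>.preimage_mem_nhds
        (by rw [sub_self]; exact hJbasis.mem_of_mem hn)
      exact this
    obtain ⟨y, hy1, a, rfl⟩ :=
      mem_closure_iff_nhds.1 (Completion.denseRange_coe (x := x)) _ hnb
    have hya : (↑a : Completion A) = γ a := by rw [hγfun]
    have hγapb : IsPowerBounded (γ a) := by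
      have heq : γ a = x + (γ a - x) := by ring
      rw [heq]
      exact aux_add_pb J hJbasis hanti hx
        (hJ1pb _ (hanti hn (by rwa [← hya])))
    refine ⟨γ a, ?_, a, hG a hγapb, rfl⟩
    have h1 : (↑a : Completion A) - x ∈ J n := hy1
    have h2 : (↑a : Completion A) - x + x ∈ W := hnsub h1
    rwa [sub_add_cancel, hya] at h2
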